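/- arXiv:1401.6402 — 3 statements merged into one kernel-verified Lean document; each statement's English description precedes it below -/
import Mathlib

section
/- Let G be a finite group acting orthogonally on E via α, and suppose the set {α(g) : g ∈ G} does not lie in any proper affine subspace of L(E). Then for every η ∈ L(E) the Hessian bilinear form of log Z at η is positive definite: for every nonzero ω ∈ L(E), ω · (DW(η) ω) > 0, where DW(η)ω = ⟨(α·ω)α⟩_η − (W(η)·ω) W(η) and ⟨·⟩_η denotes the Z-weighted average. -/
open scoped RealInnerProductSpace

/-- The trace inner product on linear endomorphisms: `M·N = tr(M* ∘ N)`. -/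
noncomputable def tinner {E : Type*} [NormedAddCommGroup E] [InnerProductSpace ℝ E]
    [FiniteDimensional ℝ E] (M N : E →ₗ[ℝ] E) : ℝ :=
  LinearMap.trace ℝ E (LinearMap.adjoint M ∘ₗ N)

section helpers
variable {E : Type*} [NormedAddCommGroup E] [InnerProductSpace ℝ E] [FiniteDimensional ℝ E]

lemma tinner_eq_sum (M N : E →ₗ[ℝ] E) :
    tinner M N = ∑ i, ⟪M ((stdOrthonormalBasis ℝ E) i), N ((stdOrthonormalBasis ℝ E) i)⟫ := by
  classical
  set b := stdOrthonormalBasis ℝ E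
  have : tinner M N = ∑ i, ⟪b i, (LinearMap.adjoint M ∘ₗ N) (b i)⟫ := by
    rw [tinner, LinearMap.trace_eq_matrix_trace ℝ b.toBasis, Matrix.trace]
    congr 1
    ext i
    simp [Matrix.diag, LinearMap.toMatrix_apply, b.coe_toBasis, b.coe_toBasis_repr_apply,
      b.repr_apply_apply, real_inner_comm]
  rw [this]
  congr 1; ext i
  simp [LinearMap.adjoint_inner_right, real_inner_comm]

lemma tinner_comm (M N : E →ₗ[ℝ] E) : tinner M N = tinner N M := by
  simp [tinner_eq_sum, real_inner_comm]

lemma tinner_self_pos {M : E →ₗ[ℝ] E} (h : M ≠ 0) : 0 < tinner M M := by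
  rw [tinner_eq_sum]
  have h1 : ∀ i, 0 ≤ ⟪M ((stdOrthonormalBasis ℝ E) i), M ((stdOrthonormalBasis ℝ E) i)⟫ :=
    fun i => real_inner_self_nonneg
  apply Finset.sum_pos' (fun i _ => h1 i)
  by_contra hc
  push_neg at hc
  apply h
  apply (stdOrthonormalBasis ℝ E).toBasis.ext
  intro i
  have := hc i (Finset.mem_univ i)
  have h2 := le_antisymm this (h1 i)
  simp [(stdOrthonormalBasis ℝ E).coe_toBasis]
  exact inner_self_eq_zero.mp h2

lemma tinner_smul_right (M N : E →ₗ[ℝ] E) (a : ℝ) : tinner M (a • N) = a * tinner M N := by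
  simp [tinner_eq_sum, inner_smul_right, Finset.mul_sum]

lemma tinner_add_right (M N P : E →ₗ[ℝ] E) : tinner M (N + P) = tinner M N + tinner M P := by
  simp [tinner_eq_sum, inner_add_right, Finset.sum_add_distrib]

lemma tinner_sub_right (M N P : E →ₗ[ℝ] E) : tinner M (N - P) = tinner M N - tinner M P := by
  simp [tinner_eq_sum, inner_sub_right, Finset.sum_sub_distrib]

lemma tinner_sum_right {ι : Type*} (M : E →ₗ[ℝ] E) (s : Finset ι) (f : ι → E →ₗ[ℝ] E) :
    tinner M (∑ i ∈ s, f i) = ∑ i ∈ s, tinner M (f i) := by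
  classical
  induction s using Finset.induction with
  | empty => simp [tinner_eq_sum]
  | insert _ _ h ih => simp [Finset.sum_insert h, tinner_add_right, ih]

end helpers

theorem stmt_8 {E : Type*} [NormedAddCommGroup E] [InnerProductSpace ℝ E]
    [FiniteDimensional ℝ E] {G : Type*} [Group G] [Fintype G]
    (α : G → E →ₗ[ℝ] E)
    (hone : α 1 = LinearMap.id)
    (hmul : ∀ g h : G, α (g * h) = α g ∘ₗ α h)
    (horth : ∀ (g : G) (x y : E), ⟪α g x, α g y⟫ = ⟪x, y⟫)
    (hspan : affineSpan ℝ (Set.range fun g : G => α g) = ⊤)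
    (Z : (E →ₗ[ℝ] E) → ℝ)
    (hZ : ∀ η, Z η = (Fintype.card G : ℝ)⁻¹ * ∑ g : G, Real.exp (tinner η (α g)))
    (W : (E →ₗ[ℝ] E) → (E →ₗ[ℝ] E))
    (hW : ∀ η, W η = ((Fintype.card G : ℝ) * Z η)⁻¹ •
      ∑ g : G, Real.exp (tinner η (α g)) • α g)
    (η ω : E →ₗ[ℝ] E) (hω : ω ≠ 0) :
    0 < tinner ω
      (((Fintype.card G : ℝ) * Z η)⁻¹ •
          ∑ g : G, Real.exp (tinner η (α g)) • (tinner ω (α g) • α g)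
        - tinner (W η) ω • W η) := by
  classical
  set e : G → ℝ := fun g => Real.exp (tinner η (α g)) with he
  set x : G → ℝ := fun g => tinner ω (α g) with hx
  set S : ℝ := ∑ g : G, e g with hSdef
  have hcard : (0:ℝ) < (Fintype.card G : ℝ) := by
    exact_mod_cast Fintype.card_pos
  have hS : 0 < S := Finset.sum_pos (fun g _ => Real.exp_pos _) Finset.univ_nonempty
  have hZS : (Fintype.card G : ℝ) * Z η = S := by
    rw [hZ, ← mul_assoc, mul_inv_cancel₀ (ne_of_gt hcard), one_mul]
  -- the mean
  set m : ℝ := S⁻¹ * ∑ g : G, e g * x g with hm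
  have hWinner : tinner ω (W η) = m := by
    rw [hW, hZS, tinner_smul_right, tinner_sum_right, hm]
    congr 1
    refine Finset.sum_congr rfl fun g _ => ?_
    rw [tinner_smul_right]
  have hWinner' : tinner (W η) ω = m := by rw [tinner_comm]; exact hWinner
  -- compute the target value
  have hval : tinner ω
      (((Fintype.card G : ℝ) * Z η)⁻¹ •
          ∑ g : G, e g • (x g • α g) - tinner (W η) ω • W η)
      = S⁻¹ * (∑ g : G, e g * (x g * x g)) - m * m := by
    rw [tinner_sub_right, tinner_smul_right, tinner_smul_right, hZS, tinner_sum_right,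
      hWinner, hWinner']
    simp only [tinner_smul_right, he, hx]
  rw [hval]
  -- variance formula
  have hvar : S⁻¹ * (∑ g : G, e g * (x g * x g)) - m * m
      = ∑ g : G, (S⁻¹ * e g) * (x g - m) ^ 2 := by
    have expand : ∀ g : G, (S⁻¹ * e g) * (x g - m) ^ 2
        = S⁻¹ * (e g * (x g * x g)) - 2 * m * (S⁻¹ * (e g * x g)) + m ^ 2 * (S⁻¹ * e g) := by
      intro g; ring
    rw [Finset.sum_congr rfl (fun g _ => expand g)]
    rw [Finset.sum_add_distrib, Finset.sum_sub_distrib, ← Finset.mul_sum, ← Finset.mul_sum,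
      ← Finset.mul_sum, ← Finset.mul_sum, ← Finset.mul_sum]
    have h1 : S⁻¹ * ∑ g : G, e g = 1 := by
      rw [← hSdef, inv_mul_cancel₀ (ne_of_gt hS)]
    have h2 : S⁻¹ * ∑ g : G, e g * x g = m := hm.symm
    rw [h2, h1]
    ring
  rw [hvar]
  -- there exists g with x g ≠ m
  have hex : ∃ g : G, x g ≠ m := by
    by_contra hc
    push_neg at hc
    -- build the linear functional tinner ω
    let f : (E →ₗ[ℝ] E) →ₗ[ℝ] ℝ :=
      { toFun := fun N => tinner ω N
        map_add' := fun N P => tinner_add_right ω N P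
        map_smul' := fun a N => by simp [tinner_smul_right] }
    let Q : AffineSubspace ℝ (E →ₗ[ℝ] E) :=
      AffineSubspace.comap f.toAffineMap (affineSpan ℝ ({m} : Set ℝ))
    have hsub : Set.range (fun g : G => α g) ⊆ (Q : Set (E →ₗ[ℝ] E)) := by
      rintro _ ⟨g, rfl⟩
      show f.toAffineMap (α g) ∈ affineSpan ℝ ({m} : Set ℝ)
      rw [AffineSubspace.mem_affineSpan_singleton]
      exact hc g
    have hall : ∀ N : E →ₗ[ℝ] E, tinner ω N = m := by
      intro N
      have : N ∈ Q := by
        have h := (affineSpan_le.mpr hsub)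
        rw [hspan] at h
        exact h trivial
      have : f.toAffineMap N ∈ affineSpan ℝ ({m} : Set ℝ) := this
      rwa [AffineSubspace.mem_affineSpan_singleton] at this
    have h0 : tinner ω (0 : E →ₗ[ℝ] E) = 0 := by
      simp [tinner_eq_sum]
    have hm0 : m = 0 := by rw [← hall 0, h0]
    have := hall ω
    rw [hm0] at this
    exact absurd this (ne_of_gt (tinner_self_pos hω))
  obtain ⟨g0, hg0⟩ := hex
  refine Finset.sum_pos' (fun g _ => ?_) ⟨g0, Finset.mem_univ g0, ?_⟩
  · positivity
  · have h1 : 0 < S⁻¹ * e g0 := by positivity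
    exact mul_pos h1 (sq_pos_of_ne_zero (sub_ne_zero.mpr hg0))
end

section
/- Suppose a group G acts absolutely irreducibly on ℝⁿ via orthogonal matrices α(g), and let h : M_n(ℝ) → ℝ be a quadratic form invariant under the left action M ↦ α(g)M. Then there exists a symmetric n×n matrix A such that h(M) = ∑_{k=1}^n m_k A m_kᵀ, where m_k denotes the k-th row of M. Equivalently, h is a linear combination of the pairwise scalar products of the columns of M. -/
open Matrix

theorem stmt_9 {n : ℕ} {G : Type*} [Group G]
    (α : G → Matrix (Fin n) (Fin n) ℝ)
    (hone : α 1 = 1)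
    (hmul : ∀ g h : G, α (g * h) = α g * α h)
    (horth : ∀ g : G, (α g)ᵀ * α g = 1)
    (hirr : ∀ B : Matrix (Fin n) (Fin n) ℝ,
      (∀ g : G, B * α g = α g * B) → ∃ c : ℝ, B = c • (1 : Matrix (Fin n) (Fin n) ℝ))
    (H : Matrix (Fin n) (Fin n) ℝ →ₗ[ℝ] Matrix (Fin n) (Fin n) ℝ →ₗ[ℝ] ℝ)
    (hsymm : ∀ M N, H M N = H N M)
    (hinv : ∀ (g : G) (M : Matrix (Fin n) (Fin n) ℝ), H (α g * M) (α g * M) = H M M) :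
    ∃ A : Matrix (Fin n) (Fin n) ℝ, Aᵀ = A ∧
      ∀ M : Matrix (Fin n) (Fin n) ℝ,
        H M M = ∑ k : Fin n, ∑ i : Fin n, ∑ j : Fin n, M k i * A i j * M k j := by
  rcases Nat.eq_zero_or_pos n with hn | hn
  · subst hn
    refine ⟨0, Subsingleton.elim _ _, fun M => ?_⟩
    have hM : M = 0 := Subsingleton.elim _ _
    simp [hM]
  · set p0 : Fin n := ⟨0, hn⟩ with hp0
    -- polarized invariance
    have hinv2 : ∀ (g : G) (M N : Matrix (Fin n) (Fin n) ℝ),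
        H (α g * M) (α g * N) = H M N := by
      intro g M N
      have h1 := hinv g M
      have h2 := hinv g N
      have h3 := hinv g (M + N)
      rw [mul_add] at h3
      simp only [map_add, LinearMap.add_apply] at h3
      have s1 : H (α g * N) (α g * M) = H (α g * M) (α g * N) := hsymm _ _
      have s2 : H N M = H M N := hsymm _ _
      linarith
    -- expansion of α g * E
    have hαE : ∀ (g : G) (p i : Fin n),
        α g * Matrix.single p i (1:ℝ) = ∑ a, α g a p • Matrix.single a i (1:ℝ) := by
      intro g p i
      ext a q
      simp [Matrix.mul_apply, Matrix.single, Matrix.sum_apply, mul_ite, ite_and,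
        Finset.sum_ite_eq, Finset.sum_ite_eq']
    set F : Fin n → Fin n → Matrix (Fin n) (Fin n) ℝ :=
      fun i j => Matrix.of fun p q =>
        H (Matrix.single p i (1:ℝ)) (Matrix.single q j (1:ℝ)) with hFdef
    have hFapp : ∀ i j p q, F i j p q
        = H (Matrix.single p i (1:ℝ)) (Matrix.single q j (1:ℝ)) := fun _ _ _ _ => rfl
    have hFinv : ∀ (g : G) (i j : Fin n), (α g)ᵀ * F i j * α g = F i j := by
      intro g i j
      ext p q
      have key : H (α g * Matrix.single p i (1:ℝ)) (α g * Matrix.single q j (1:ℝ))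
          = H (Matrix.single p i (1:ℝ)) (Matrix.single q j (1:ℝ)) := hinv2 g _ _
      rw [hαE, hαE] at key
      simp only [map_sum, _root_.map_smul, LinearMap.sum_apply, LinearMap.smul_apply,
        smul_eq_mul] at key
      rw [hFapp, ← key, Matrix.mul_apply]
      simp_rw [Matrix.mul_apply, Matrix.transpose_apply, Finset.sum_mul, Finset.mul_sum]
      refine Finset.sum_congr rfl fun b _ => Finset.sum_congr rfl fun a _ => ?_
      rw [hFapp]; ring
    have hFcomm : ∀ (i j : Fin n) (g : G), F i j * α g = α g * F i j := by
      intro i j g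
      have h2 : α g * (α g)ᵀ = 1 := mul_eq_one_comm.mp (horth g)
      calc F i j * α g = (α g * (α g)ᵀ) * (F i j * α g) := by rw [h2, one_mul]
        _ = α g * ((α g)ᵀ * F i j * α g) := by simp only [Matrix.mul_assoc]
        _ = α g * F i j := by rw [hFinv]
    set A : Matrix (Fin n) (Fin n) ℝ := Matrix.of fun i j => F i j p0 p0 with hAdef
    have hFscalar : ∀ i j, F i j = A i j • (1 : Matrix (Fin n) (Fin n) ℝ) := by
      intro i j
      obtain ⟨c, hc⟩ := hirr (F i j) (hFcomm i j)
      have hAc : A i j = c := by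
        show F i j p0 p0 = c
        rw [hc]
        simp [Matrix.one_apply]
      rw [hAc, hc]
    have hFval : ∀ i j p q, H (Matrix.single p i (1:ℝ)) (Matrix.single q j (1:ℝ))
        = if p = q then A i j else 0 := by
      intro i j p q
      rw [← hFapp i j p q, hFscalar]
      simp [Matrix.one_apply, mul_ite]
    have hAsymm : ∀ i j, A i j = A j i := by
      intro i j
      show F i j p0 p0 = F j i p0 p0
      rw [hFapp, hFapp]
      exact hsymm _ _
    refine ⟨A, ?_, ?_⟩
    · ext i j
      exact hAsymm j i
    · intro M
      conv_lhs => rw [matrix_eq_sum_single M]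
      have hstd : ∀ k i, Matrix.single k i (M k i) = M k i • Matrix.single k i (1:ℝ) := by
        intro k i
        rw [smul_single, smul_eq_mul, mul_one]
      simp only [hstd, map_sum, _root_.map_smul, LinearMap.sum_apply, LinearMap.smul_apply,
        smul_eq_mul, hFval]
      refine Finset.sum_congr rfl fun p _ => Finset.sum_congr rfl fun i _ => ?_
      simp only [mul_ite, mul_zero]
      rw [Finset.sum_comm]
      simp only [Finset.sum_ite_eq', Finset.mem_univ, if_true]
      rw [Finset.mul_sum]
      refine Finset.sum_congr rfl fun j _ => ?_
      rw [hAsymm j i]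
      ring
end

section
/- Every D₃-invariant polynomial on ℝ², for the standard action of D₃ generated by rotation by 2π/3 and reflection in the x-axis, is a polynomial in X = x² + u² and Y = x³ − 3xu². -/
open Matrix MvPolynomial

/-- Rotation of the plane by `2π/3`. -/
noncomputable def rot3 : Matrix (Fin 2) (Fin 2) ℝ :=
  !![-(1/2), -(Real.sqrt 3/2); Real.sqrt 3/2, -(1/2)]

/-- Reflection in the `x`-axis. -/
noncomputable def refl0 : Matrix (Fin 2) (Fin 2) ℝ := !![1, 0; 0, -1]

/-- Substitution of a linear change of variables into a polynomial in two
variables: `(substM g P)(x) = P(g x)`. -/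
noncomputable def substM (g : Matrix (Fin 2) (Fin 2) ℝ) :
    MvPolynomial (Fin 2) ℝ →ₐ[ℝ] MvPolynomial (Fin 2) ℝ :=
  MvPolynomial.aeval (fun i : Fin 2 => ∑ j : Fin 2, MvPolynomial.C (g i j) * MvPolynomial.X j)

/-- The basic invariant `X = x² + u²`. -/
noncomputable def polyX : MvPolynomial (Fin 2) ℝ :=
  MvPolynomial.X 0 ^ 2 + MvPolynomial.X 1 ^ 2

/-- The basic invariant `Y = x³ − 3xu²`. -/
noncomputable def polyY : MvPolynomial (Fin 2) ℝ :=
  MvPolynomial.X 0 ^ 3 - 3 * MvPolynomial.X 0 * MvPolynomial.X 1 ^ 2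

namespace D3Aux

abbrev R := MvPolynomial (Fin 2) ℝ

lemma substM_X (g : Matrix (Fin 2) (Fin 2) ℝ) (i : Fin 2) :
    substM g (X i) = C (g i 0) * X 0 + C (g i 1) * X 1 := by
  simp [substM, Fin.sum_univ_two]

lemma substM_C (g : Matrix (Fin 2) (Fin 2) ℝ) (r : ℝ) : substM g (C r) = C r := by
  simp [substM]

lemma rot3_X0 : substM rot3 (X 0) =
    C (-(1/2):ℝ) * X 0 + C (-(Real.sqrt 3/2):ℝ) * X 1 := by
  rw [substM_X]; norm_num [rot3]

lemma rot3_X1 : substM rot3 (X 1) =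
    C (Real.sqrt 3/2:ℝ) * X 0 + C (-(1/2):ℝ) * X 1 := by
  rw [substM_X]; norm_num [rot3]

lemma refl0_X0 : substM refl0 (X 0) = X 0 := by rw [substM_X]; norm_num [refl0]

lemma refl0_X1 : substM refl0 (X 1) = - X 1 := by rw [substM_X]; norm_num [refl0]

/-- `t = C √3`. -/
noncomputable def t : R := C (Real.sqrt 3)

lemma ht : t ^ 2 = 3 := by
  rw [t, ← map_pow, Real.sq_sqrt (by norm_num : (3:ℝ) ≥ 0)]
  simp [map_ofNat]

lemma two_x1 : 2 * substM rot3 (X 0) = -(X 0) - t * X 1 := by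
  rw [rot3_X0, t]
  rw [show (-(1/2):ℝ) = -(2⁻¹) by norm_num,
    show (-(Real.sqrt 3/2):ℝ) = -(Real.sqrt 3 * 2⁻¹) by ring]
  rw [map_neg, map_neg, C_mul]
  have h2 : (2:R) * C (2⁻¹:ℝ) = 1 := by
    rw [show (2:R) = C (2:ℝ) by simp [map_ofNat], ← C_mul]; norm_num
  linear_combination (- X 0 - C (Real.sqrt 3) * X 1 : R) * h2

lemma two_u1 : 2 * substM rot3 (X 1) = t * X 0 - X 1 := by
  rw [rot3_X1, t]
  rw [show (-(1/2):ℝ) = -(2⁻¹) by norm_num,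
    show ((Real.sqrt 3/2):ℝ) = (Real.sqrt 3 * 2⁻¹) by ring]
  rw [map_neg, C_mul]
  have h2 : (2:R) * C (2⁻¹:ℝ) = 1 := by
    rw [show (2:R) = C (2:ℝ) by simp [map_ofNat], ← C_mul]; norm_num
  linear_combination (C (Real.sqrt 3) * X 0 - X 1 : R) * h2

lemma two_x2 : 2 * substM rot3 (substM rot3 (X 0)) = -(X 0) + t * X 1 := by
  have key : (2:R) * (2 * substM rot3 (substM rot3 (X 0))) = 2 * (-(X 0) + t * X 1) := by
    have e : (2:R) * (2 * substM rot3 (substM rot3 (X 0)))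
        = 2 * substM rot3 (2 * substM rot3 (X 0)) := by
      rw [_root_.map_mul, map_ofNat]
    have hσt : substM rot3 t = t := by rw [t]; exact substM_C _ _
    rw [e, two_x1, map_sub, map_neg, _root_.map_mul, hσt]
    linear_combination (-1 : R) * two_x1 - t * two_u1 - X 0 * ht
  exact mul_left_cancel₀ (by norm_num : (2:R) ≠ 0) key

lemma rot3_polyX : substM rot3 polyX = polyX := by
  have h4 : (4:R) * substM rot3 polyX = 4 * polyX := by
    have e : (4:R) * substM rot3 polyX
        = (2 * substM rot3 (X 0))^2 + (2 * substM rot3 (X 1))^2 := by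
      rw [polyX]; simp only [map_add, map_pow]; ring
    rw [e, two_x1, two_u1, polyX]
    linear_combination (X 0 ^2 + X 1^2 : R) * ht
  exact mul_left_cancel₀ (by norm_num : (4:R) ≠ 0) h4

lemma rot3_polyY : substM rot3 polyY = polyY := by
  have h8 : (8:R) * substM rot3 polyY = 8 * polyY := by
    have e : (8:R) * substM rot3 polyY
        = (2 * substM rot3 (X 0))^3
          - 3 * (2 * substM rot3 (X 0)) * (2 * substM rot3 (X 1))^2 := by
      rw [polyY]; simp only [map_sub, _root_.map_mul, map_pow, map_ofNat]; ring
    rw [e, two_x1, two_u1, polyY]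
    linear_combination (t*(3*(X 0:R)^2* X 1 - (X 1)^3)
      + 3*((X 0)^3 - 3*(X 0)*(X 1)^2)) * ht
  exact mul_left_cancel₀ (by norm_num : (8:R) ≠ 0) h8

/-- The substitution tuple. -/
noncomputable def v : Fin 2 → R := ![polyX, polyY]

lemma aeval_v_X0 : aeval (R := ℝ) v (X 0) = polyX := by simp [v]
lemma aeval_v_X1 : aeval (R := ℝ) v (X 1) = polyY := by simp [v]

lemma monomial_eq2 (d : Fin 2 →₀ ℕ) (r : ℝ) :
    (monomial d r : R) = C r * X 0 ^ (d 0) * X 1 ^ (d 1) := by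
  rw [monomial_eq, Finsupp.prod_fintype _ _ (fun i => pow_zero _), Fin.prod_univ_two, mul_assoc]

/-- Polynomials of the form `(A + B·x + C·x²)/4ⁿ` with `A,B,C` polynomials in
`polyX, polyY`. -/
noncomputable def GoodS : Subalgebra ℝ R where
  carrier := {P | ∃ (n : ℕ) (A B Cc : R),
    (4:R)^n * P = aeval v A + aeval v B * X 0 + aeval v Cc * X 0^2}
  algebraMap_mem' := fun r => ⟨0, C r, 0, 0, by simp [MvPolynomial.algebraMap_eq]⟩
  add_mem' := by
    rintro P Q ⟨n, A, B, Cc, h⟩ ⟨m, A', B', C', h'⟩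
    refine ⟨n + m, 4^m * A + 4^n * A', 4^m * B + 4^n * B', 4^m * Cc + 4^n * C', ?_⟩
    have key : (4:R)^(n+m) * (P + Q) = 4^m * (4^n * P) + 4^n * (4^m * Q) := by ring
    rw [key, h, h']
    simp only [map_add, _root_.map_mul, map_pow, map_ofNat]
    ring
  mul_mem' := by
    rintro P Q ⟨n, A, B, Cc, h⟩ ⟨m, A', B', C', h'⟩
    refine ⟨n + m + 1,
      4*(A*A') + X 1*(B*C' + Cc*B'),
      4*(A*B' + B*A') + 3*(X 0)*(B*C' + Cc*B') + X 1*(Cc*C'),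
      4*(A*C' + B*B' + Cc*A') + 3*(X 0)*(Cc*C'), ?_⟩
    have key : (4:R)^(n+m+1) * (P * Q) = 4 * ((4^n * P) * (4^m * Q)) := by ring
    rw [key, h, h']
    simp only [map_add, _root_.map_mul, map_ofNat, aeval_v_X0, aeval_v_X1]
    rw [polyX, polyY]; ring

lemma X0_mem : (X 0 : R) ∈ GoodS := ⟨0, 0, 1, 0, by simp⟩

lemma X1sq_mem : (X 1 : R)^2 ∈ GoodS := by
  refine ⟨0, X 0, 0, -1, ?_⟩
  simp only [aeval_v_X0, map_zero, map_neg, _root_.map_one, pow_zero, one_mul, zero_mul]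
  rw [polyX]; ring

lemma substM_refl0_monomial (d : Fin 2 →₀ ℕ) (r : ℝ) :
    substM refl0 (monomial d r) = C ((-1)^(d 1) : ℝ) * monomial d r := by
  rw [monomial_eq2, _root_.map_mul, _root_.map_mul, substM_C, map_pow, map_pow,
    refl0_X0, refl0_X1, neg_pow]
  rw [show ((-1:R)^(d 1)) = C ((-1:ℝ)^(d 1)) by rw [C_pow, map_neg, C_1]]
  ring

lemma coeff_eq_zero_of_odd (P : R) (h : substM refl0 P = P) (d : Fin 2 →₀ ℕ)
    (hd : ¬ Even (d 1)) : coeff d P = 0 := by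
  have h2 : substM refl0 P = ∑ e ∈ P.support, C ((-1)^(e 1) : ℝ) * monomial e (coeff e P) := by
    conv_lhs => rw [P.as_sum]
    rw [map_sum]
    exact Finset.sum_congr rfl fun e _ => substM_refl0_monomial e _
  have hc : coeff d P = (-1)^(d 1) * coeff d P := by
    conv_lhs => rw [← h, h2]
    rw [coeff_sum]
    rw [Finset.sum_eq_single d]
    · rw [coeff_C_mul, coeff_monomial, if_pos rfl]
    · intro e _ hne
      rw [coeff_C_mul, coeff_monomial, if_neg hne, mul_zero]
    · intro hd'
      rw [coeff_C_mul, coeff_monomial, if_pos rfl, notMem_support_iff.mp hd', mul_zero]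
  rw [Nat.not_even_iff_odd] at hd
  rw [Odd.neg_one_pow hd] at hc
  linarith [hc]

lemma even_mem (P : R) (h : substM refl0 P = P) :
    P ∈ Algebra.adjoin ℝ ({X 0, (X 1)^2} : Set R) := by
  nth_rewrite 1 [P.as_sum]
  apply Subalgebra.sum_mem
  intro e he
  have heven : Even (e 1) := by
    by_contra hodd
    exact notMem_support_iff.mpr (coeff_eq_zero_of_odd P h e hodd) he
  obtain ⟨k, hk⟩ := heven
  rw [monomial_eq2, hk, show k + k = 2*k by ring, pow_mul]
  refine mul_mem (mul_mem ?_ (pow_mem (Algebra.subset_adjoin (Set.mem_insert _ _)) _))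
    (pow_mem (Algebra.subset_adjoin (by simp)) _)
  rw [← MvPolynomial.algebraMap_eq]
  exact Subalgebra.algebraMap_mem _ _

lemma hfix (Q : R) : substM rot3 (aeval (R := ℝ) v Q) = aeval (R := ℝ) v Q := by
  have hv : (fun i => substM rot3 (v i)) = v := by
    funext i
    fin_cases i <;> simp [v, rot3_polyX, rot3_polyY]
  rw [comp_aeval_apply, hv]

end D3Aux

open D3Aux in
theorem stmt_12 (P : MvPolynomial (Fin 2) ℝ)
    (hrot : substM rot3 P = P) (hrefl : substM refl0 P = P) :
    ∃ Q : MvPolynomial (Fin 2) ℝ, MvPolynomial.aeval ![polyX, polyY] Q = P := by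
  have hmem : P ∈ GoodS := by
    refine Algebra.adjoin_le ?_ (even_mem P hrefl)
    intro p hp
    rcases Set.mem_insert_iff.mp hp with rfl | hp
    · exact X0_mem
    · rw [Set.mem_singleton_iff] at hp; subst hp; exact X1sq_mem
  obtain ⟨n, A, B, Cc, hP⟩ := hmem
  have h1 : (4:R)^n * P = aeval v A + aeval v B * substM rot3 (X 0)
      + aeval v Cc * (substM rot3 (X 0))^2 := by
    have := congrArg (substM rot3) hP
    simpa only [map_add, _root_.map_mul, map_pow, map_ofNat, hfix, hrot] using this
  have h2 : (4:R)^n * P = aeval v A + aeval v B * substM rot3 (substM rot3 (X 0))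
      + aeval v Cc * (substM rot3 (substM rot3 (X 0)))^2 := by
    have := congrArg (substM rot3) h1
    simpa only [map_add, _root_.map_mul, map_pow, map_ofNat, hfix, hrot] using this
  have e0 : (4:R)^(n+1) * P = 4*aeval v A + 2*aeval v B*(2*X 0)
      + aeval v Cc*(2*X 0)^2 := by
    calc (4:R)^(n+1) * P = 4 * (4^n * P) := by ring
    _ = _ := by rw [hP]; ring
  have e1 : (4:R)^(n+1) * P = 4*aeval v A + 2*aeval v B*(-(X 0) - t*X 1)
      + aeval v Cc*(-(X 0) - t*X 1)^2 := by
    calc (4:R)^(n+1) * P = 4 * (4^n * P) := by ring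
    _ = 4*aeval v A + 2*aeval v B*(2*substM rot3 (X 0))
        + aeval v Cc*(2*substM rot3 (X 0))^2 := by rw [h1]; ring
    _ = _ := by rw [two_x1]
  have e2 : (4:R)^(n+1) * P = 4*aeval v A + 2*aeval v B*(-(X 0) + t*X 1)
      + aeval v Cc*(-(X 0) + t*X 1)^2 := by
    calc (4:R)^(n+1) * P = 4 * (4^n * P) := by ring
    _ = 4*aeval v A + 2*aeval v B*(2*substM rot3 (substM rot3 (X 0)))
        + aeval v Cc*(2*substM rot3 (substM rot3 (X 0)))^2 := by rw [h2]; ring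
    _ = _ := by rw [two_x2]
  have key : (3:R) * ((4:R)^(n+1) * P)
      = 3 * (4*aeval v A + 2*aeval v Cc*(X 0^2 + X 1^2)) := by
    linear_combination e0 + e1 + e2 + (2 * aeval (R := ℝ) v Cc * (X 1)^2) * ht
  have hkey : (4:R)^(n+1) * P = 4*aeval v A + 2*aeval v Cc*(X 0^2 + X 1^2) :=
    mul_left_cancel₀ (by norm_num : (3:R) ≠ 0) key
  refine ⟨C (((4:ℝ)^(n+1))⁻¹) * (4*A + 2*Cc*X 0), ?_⟩
  have hXX : aeval (R := ℝ) v (X 0) = X 0^2 + X 1^2 := by rw [aeval_v_X0, polyX]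
  have hC4 : (C (((4:ℝ)^(n+1))⁻¹) : R) * (4:R)^(n+1) = 1 := by
    rw [show ((4:R)^(n+1)) = C ((4:ℝ)^(n+1)) by rw [C_pow, map_ofNat], ← C_mul]
    norm_num
  calc aeval ![polyX, polyY] (C (((4:ℝ)^(n+1))⁻¹) * (4*A + 2*Cc*X 0))
      = C (((4:ℝ)^(n+1))⁻¹) * (4*aeval v A + 2*aeval v Cc*(X 0^2 + X 1^2)) := by
        show aeval v _ = _
        simp only [_root_.map_mul, map_add, map_ofNat, hXX, aeval_C,
          MvPolynomial.algebraMap_eq]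
    _ = C (((4:ℝ)^(n+1))⁻¹) * ((4:R)^(n+1) * P) := by rw [hkey]
    _ = P := by rw [← mul_assoc, hC4, one_mul]
end
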